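/- Let n ≥ 1 and let k : Fin n → Fin n → ℝ with k i j ≥ 0 for all i ≠ j (k i j is the rate constant of the transition A_j → A_i). There exists a vector p ∈ ℝ^n with p_i > 0 for all i satisfying the detailed balance conditions k i j * p_j = k j i * p_i for all i ≠ j, if and only if both of the following hold: (1) for all i ≠ j, k i j > 0 implies k j i > 0; and (2) for every finite sequence of indices i_1, …, i_q (with the cyclic convention i_{q+1} = i_1) such that k i_{j+1} i_j > 0 for all j = 1,…,q, one has ∏_{j=1}^q k i_{j+1} i_j = ∏_{j=1}^q k i_j i_{j+1}. -/

import Mathlib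

namespace LDB

variable {n : ℕ} (k : Fin n → Fin n → ℝ)

/-- edge relation: both rate constants positive -/
def E (x y : Fin n) : Prop := 0 < k x y ∧ 0 < k y x

lemma E_symm {x y : Fin n} (h : E k x y) : E k y x := ⟨h.2, h.1⟩

/-- ratio -/
noncomputable def g (x y : Fin n) : ℝ := k x y / k y x

/-- product of ratios along a walk -/
noncomputable def pp : List (Fin n) → ℝ
  | [] => 1
  | [_] => 1
  | a :: b :: l => g k b a * pp (b :: l)

@[simp] lemma pp_nil : pp k [] = 1 := rfl
@[simp] lemma pp_single (a : Fin n) : pp k [a] = 1 := rfl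
lemma pp_cons_cons (a b : Fin n) (l : List (Fin n)) :
    pp k (a :: b :: l) = g k b a * pp k (b :: l) := rfl

lemma pp_pos : ∀ (l : List (Fin n)), l.Chain' (E k) → 0 < pp k l
  | [], _ => one_pos
  | [_], _ => one_pos
  | a :: b :: l, h => by
      have h := List.isChain_cons_cons.mp h
      exact mul_pos (div_pos h.1.2 h.1.1) (pp_pos (b :: l) h.2)

lemma pp_append : ∀ (l₁ : List (Fin n)) (c : Fin n) (l₂ : List (Fin n)),
    pp k (l₁ ++ c :: l₂) = pp k (l₁ ++ [c]) * pp k (c :: l₂)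
  | [], c, l₂ => by simp
  | [a], c, l₂ => by simp [pp_cons_cons]
  | a :: b :: l₁, c, l₂ => by
      have ih := pp_append (b :: l₁) c l₂
      simp only [List.cons_append] at ih ⊢
      rw [pp_cons_cons, pp_cons_cons, ih]
      ring

lemma pp_eq_prod : ∀ (a : Fin n) (l : List (Fin n)),
    pp k (a :: l) = ∏ j : Fin l.length,
      g k ((a :: l)[j.1 + 1]'(by simp only [List.length_cons]; exact Nat.succ_lt_succ j.2))
        ((a :: l)[j.1]'(by simp only [List.length_cons]; exact Nat.lt_succ_of_lt j.2))
  | a, [] => by simp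
  | a, b :: t => by
      rw [pp_cons_cons, pp_eq_prod b t]
      refine Eq.trans ?_ (Fin.prod_univ_succ (n := t.length) _).symm
      congr 1

/-- every closed walk has ratio-product 1, given the Wegscheider condition -/
lemma pp_cycle
    (hW : ∀ q : ℕ, ∀ idx : Fin (q + 1) → Fin n,
      (∀ j : Fin (q + 1), 0 < k (idx (j + 1)) (idx j)) →
      ∏ j : Fin (q + 1), k (idx (j + 1)) (idx j)
        = ∏ j : Fin (q + 1), k (idx j) (idx (j + 1)))
    (w : List (Fin n)) (hw : w ≠ []) (hc : w.Chain' (E k))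
    (hcyc : w.getLast hw = w.head hw) : pp k w = 1 := by
  match w with
  | [a] => simp
  | a :: b :: t =>
    have hlen : (a :: b :: t).length = t.length + 1 + 1 := rfl
    set idx : Fin (t.length + 1) → Fin n :=
      fun j => (a :: b :: t)[j.1]'(by simp only [List.length_cons]; omega) with hidxdef
    have hget : ∀ (i : ℕ) (h : i + 1 < (a :: b :: t).length),
        E k ((a :: b :: t)[i]'(by omega)) ((a :: b :: t)[i + 1]'h) := by
      intro i h
      have := List.isChain_iff_getElem.mp hc i (by simpa using by omega)
      simpa using this
    have hlast : (a :: b :: t)[t.length + 1]'(by simp) = a := by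
      have := List.getLast_eq_getElem (l := a :: b :: t) (by simp)
      rw [hcyc] at this
      simpa using this.symm
    have hidx : ∀ j : Fin (t.length + 1),
        idx (j + 1) = (a :: b :: t)[j.1 + 1]'(by simp only [List.length_cons]; omega) := by
      intro j
      rcases eq_or_ne j (Fin.last t.length) with hj | hj
      · subst hj
        simp only [hidxdef]
        have h1 : ((Fin.last t.length) + 1).1 = 0 := by
          simp [Fin.val_add_one]
        simp only [Fin.last] at h1
        simp only [h1, Fin.last]
        simp [hlast]
      · have h1 : (j + 1).1 = j.1 + 1 := by
          rw [Fin.val_add_one]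
          simp [hj]
        simp only [hidxdef, h1]
    have hstep : ∀ j : Fin (t.length + 1), 0 < k (idx (j + 1)) (idx j) := by
      intro j
      rw [hidx j]
      exact (hget j.1 (by simp only [List.length_cons]; omega)).2
    have hstep' : ∀ j : Fin (t.length + 1), 0 < k (idx j) (idx (j + 1)) := by
      intro j
      rw [hidx j]
      exact (hget j.1 (by simp only [List.length_cons]; omega)).1
    have hWeq := hW t.length idx hstep
    rw [pp_eq_prod]
    have : ∀ j : Fin (t.length + 1),
        g k ((a :: b :: t)[j.1 + 1]'(by simp only [List.length_cons]; omega))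
          ((a :: b :: t)[j.1]'(by simp only [List.length_cons]; omega))
        = k (idx (j + 1)) (idx j) / k (idx j) (idx (j + 1)) := by
      intro j
      rw [hidx j]
      rfl
    calc (∏ j : Fin (b :: t).length,
            g k ((a :: b :: t)[j.1 + 1]'_) ((a :: b :: t)[j.1]'_))
        = ∏ j : Fin (t.length + 1), k (idx (j + 1)) (idx j) / k (idx j) (idx (j + 1)) :=
          Finset.prod_congr rfl (fun j _ => this j)
      _ = (∏ j : Fin (t.length + 1), k (idx (j + 1)) (idx j))
            / ∏ j : Fin (t.length + 1), k (idx j) (idx (j + 1)) :=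
          Finset.prod_div_distrib _ _
      _ = 1 := by
          rw [hWeq, div_self (Finset.prod_ne_zero_iff.mpr (fun j _ => (hstep' j).ne'))]

lemma pp_closing
    (hW : ∀ q : ℕ, ∀ idx : Fin (q + 1) → Fin n,
      (∀ j : Fin (q + 1), 0 < k (idx (j + 1)) (idx j)) →
      ∏ j : Fin (q + 1), k (idx (j + 1)) (idx j)
        = ∏ j : Fin (q + 1), k (idx j) (idx (j + 1)))
    (w₁ w₂ : List (Fin n)) (hne₁ : w₁ ≠ []) (hne₂ : w₂ ≠ [])
    (h₁ : w₁.Chain' (E k)) (h₂ : w₂.Chain' (E k))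
    (hh : w₁.head hne₁ = w₂.head hne₂)
    (hl : w₁.getLast hne₁ = w₂.getLast hne₂) :
    pp k w₁ * pp k w₂.reverse = 1 := by
  set c := w₁.getLast hne₁ with hc
  have hrevne : w₂.reverse ≠ [] := by simpa
  have hrev2 : w₂.reverse.Chain' (E k) :=
    List.isChain_reverse.mpr (List.IsChain.imp (fun a b h => E_symm k h) h₂)
  have hheadrev : w₂.reverse.head hrevne = c := by
    have h := List.head?_reverse (l := w₂)
    rw [List.head?_eq_head hrevne, List.getLast?_eq_getLast hne₂] at h
    rw [Option.some_inj] at h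
    rw [h, ← hl]
  have hrw₂ : w₂.reverse = c :: w₂.reverse.tail := by
    conv_lhs => rw [← List.cons_head_tail hrevne]
    rw [hheadrev]
  have hw₁ : w₁.dropLast ++ [c] = w₁ := List.dropLast_append_getLast hne₁
  set u : List (Fin n) := w₁ ++ w₂.reverse.tail with hu
  have hune : u ≠ [] := by simp [hu, hne₁]
  have hchain : u.Chain' (E k) := by
    rw [hu]
    refine List.isChain_append.mpr ⟨h₁, List.IsChain.tail hrev2, ?_⟩
    intro x hx y hy
    rw [List.getLast?_eq_getLast hne₁, Option.mem_some_iff] at hx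
    subst hx
    have := (List.isChain_cons.mp (hrw₂ ▸ hrev2)).1
    exact this y hy
  have hhead : u.head hune = w₁.head hne₁ := by
    show (w₁ ++ w₂.reverse.tail).head (by simp [hne₁]) = w₁.head hne₁
    rw [List.head_append]
    simp [hne₁]
  have hppu : pp k u = pp k w₁ * pp k w₂.reverse := by
    conv_lhs => rw [hu, ← hw₁, List.append_assoc, List.singleton_append]
    rw [pp_append, hw₁, ← hrw₂]
  rcases eq_or_ne w₂.reverse.tail ([] : List (Fin n)) with ht | ht
  · -- w₂ is a singleton, so w₁ itself is a closed walk
    have hw₂ : w₂.reverse = [c] := by rw [hrw₂, ht]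
    have hcyc : w₁.getLast hne₁ = w₁.head hne₁ := by
      rw [hh, ← hc]
      have : w₂.head hne₂ = c := by
        have := congrArg List.reverse hw₂
        simp at this
        simp [this]
      rw [this]
    rw [hw₂, pp_single, mul_one]
    exact pp_cycle k hW w₁ hne₁ h₁ hcyc
  · have hgl : w₂.reverse.tail.getLast? = some (w₁.head hne₁) := by
      obtain ⟨d, t', he⟩ := List.exists_cons_of_ne_nil ht
      have q1 : w₂.reverse.getLast? = some (w₁.head hne₁) := by
        rw [List.getLast?_eq_getLast hrevne, List.getLast_reverse, hh]
      rw [hrw₂, he, List.getLast?_cons_cons] at q1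
      rw [he]
      exact q1
    have hcyc : u.getLast hune = u.head hune := by
      rw [hhead]
      show (w₁ ++ w₂.reverse.tail).getLast (by simp [hne₁]) = w₁.head hne₁
      rw [List.getLast_append, dif_neg (by simpa using ht)]
      rw [List.getLast?_eq_getLast ht] at hgl
      exact Option.some_inj.mp hgl
    rw [← hppu]
    exact pp_cycle k hW u hune hchain hcyc

lemma pp_eq_of_same_ends
    (hW : ∀ q : ℕ, ∀ idx : Fin (q + 1) → Fin n,
      (∀ j : Fin (q + 1), 0 < k (idx (j + 1)) (idx j)) →
      ∏ j : Fin (q + 1), k (idx (j + 1)) (idx j)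
        = ∏ j : Fin (q + 1), k (idx j) (idx (j + 1)))
    (w₁ w₂ : List (Fin n)) (hne₁ : w₁ ≠ []) (hne₂ : w₂ ≠ [])
    (h₁ : w₁.Chain' (E k)) (h₂ : w₂.Chain' (E k))
    (hh : w₁.head hne₁ = w₂.head hne₂)
    (hl : w₁.getLast hne₁ = w₂.getLast hne₂) :
    pp k w₁ = pp k w₂ := by
  have A := pp_closing k hW w₁ w₂ hne₁ hne₂ h₁ h₂ hh hl
  have B := pp_closing k hW w₂ w₂ hne₂ hne₂ h₂ h₂ rfl rfl
  have hpos : 0 < pp k w₂.reverse :=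
    pp_pos k _ (List.isChain_reverse.mpr (List.IsChain.imp (fun a b h => E_symm k h) h₂))
  exact mul_right_cancel₀ hpos.ne' (A.trans B.symm)

lemma exists_walk {a b : Fin n} (h : Relation.ReflTransGen (E k) a b) :
    ∃ l : List (Fin n), (a :: l).Chain' (E k) ∧ (a :: l).getLast (by simp) = b := by
  induction h with
  | refl => exact ⟨[], List.isChain_singleton a, rfl⟩
  | @tail b c hab hbc ih =>
    obtain ⟨l, hcl, hll⟩ := ih
    refine ⟨l ++ [c], ?_, ?_⟩
    · show ((a :: l) ++ [c]).Chain' (E k)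
      refine List.isChain_append.mpr ⟨hcl, List.isChain_singleton c, ?_⟩
      intro x hx y hy
      rw [List.getLast?_eq_getLast (l := a :: l) (by simp), hll, Option.mem_some_iff] at hx
      simp only [List.head?_cons, Option.mem_some_iff] at hy
      subst hx; subst hy
      exact hbc
    · show ((a :: l) ++ [c]).getLast (by simp) = c
      exact List.getLast_concat

end LDB

open LDB in
/-- Detailed balance for a linear (monomolecular) kinetic system:
a positive equilibrium with detailed balance exists iff the system is
reversible and every oriented cycle satisfies the Wegscheider identity. -/
theorem linear_detailed_balance_iff_wegscheider
    (n : ℕ) (hn : 1 ≤ n) (k : Fin n → Fin n → ℝ)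
    (hk : ∀ i j : Fin n, i ≠ j → 0 ≤ k i j) :
    (∃ p : Fin n → ℝ, (∀ i, 0 < p i) ∧
        ∀ i j : Fin n, i ≠ j → k i j * p j = k j i * p i) ↔
      ((∀ i j : Fin n, i ≠ j → 0 < k i j → 0 < k j i) ∧
        (∀ q : ℕ, ∀ idx : Fin (q + 1) → Fin n,
          (∀ j : Fin (q + 1), 0 < k (idx (j + 1)) (idx j)) →
          ∏ j : Fin (q + 1), k (idx (j + 1)) (idx j)
            = ∏ j : Fin (q + 1), k (idx j) (idx (j + 1)))) := by
  constructor
  · rintro ⟨p, hp, hdb⟩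
    constructor
    · intro i j hij hpos
      by_contra hneg
      have h0 : k j i ≤ 0 := not_lt.mp hneg
      have h1 := hdb i j hij
      nlinarith [hp i, hp j]
    · intro q idx hpos
      have key : ∀ j : Fin (q + 1),
          k (idx (j + 1)) (idx j) * p (idx j) = k (idx j) (idx (j + 1)) * p (idx (j + 1)) := by
        intro j
        rcases eq_or_ne (idx (j + 1)) (idx j) with he | hne
        · rw [he]
        · exact hdb _ _ hne
      have h1 : (∏ j : Fin (q + 1), k (idx (j + 1)) (idx j)) * ∏ j : Fin (q + 1), p (idx j)
          = (∏ j : Fin (q + 1), k (idx j) (idx (j + 1))) * ∏ j : Fin (q + 1), p (idx (j + 1)) := by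
        rw [← Finset.prod_mul_distrib, ← Finset.prod_mul_distrib]
        exact Finset.prod_congr rfl (fun j _ => key j)
      have h2 : (∏ j : Fin (q + 1), p (idx (j + 1))) = ∏ j : Fin (q + 1), p (idx j) :=
        Fintype.prod_equiv (Equiv.addRight 1) _ _ (fun j => rfl)
      have hne : (∏ j : Fin (q + 1), p (idx j)) ≠ 0 :=
        (Finset.prod_pos (fun j _ => hp _)).ne'
      rw [h2] at h1
      exact mul_right_cancel₀ hne h1
  · rintro ⟨hrev, hW⟩
    letI s : Setoid (Fin n) :=
      ⟨Relation.ReflTransGen (E k),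
        ⟨fun _ => .refl,
         fun h => haveI : Std.Symm (E k) := ⟨fun _ _ hxy => E_symm k hxy⟩; Std.Symm.symm _ _ h,
         fun h h' => h.trans h'⟩⟩
    set rep : Fin n → Fin n := fun i => (Quotient.mk s i).out with hrepdef
    have hrepR : ∀ i, Relation.ReflTransGen (E k) (rep i) i :=
      fun i => Quotient.exact (Quotient.out_eq (Quotient.mk s i))
    have hrepeq : ∀ {i j : Fin n}, Relation.ReflTransGen (E k) i j → rep i = rep j :=
      fun h => congrArg Quotient.out (Quotient.sound h)
    have hwalk : ∀ i, ∃ l : List (Fin n),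
        ((rep i :: l).Chain' (E k)) ∧ (rep i :: l).getLast (by simp) = i :=
      fun i => exists_walk k (hrepR i)
    choose L hL1 hL2 using hwalk
    refine ⟨fun i => pp k (rep i :: L i), fun i => pp_pos k _ (hL1 i), ?_⟩
    intro i j hij
    show k i j * pp k (rep j :: L j) = k j i * pp k (rep i :: L i)
    by_cases hpos : 0 < k i j
    · have hji : 0 < k j i := hrev i j hij hpos
      have hEji : E k j i := ⟨hji, hpos⟩
      have hr : rep j = rep i := hrepeq (Relation.ReflTransGen.single hEji)
      have hchain2 : ((rep j :: L j) ++ [i]).Chain' (E k) := by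
        refine List.isChain_append.mpr ⟨hL1 j, List.isChain_singleton i, ?_⟩
        intro x hx y hy
        rw [List.getLast?_eq_getLast (l := rep j :: L j) (by simp), hL2 j, Option.mem_some_iff] at hx
        simp only [List.head?_cons, Option.mem_some_iff] at hy
        subst hx; subst hy
        exact hEji
      have hkey : pp k (rep i :: L i) = pp k ((rep j :: L j) ++ [i]) := by
        refine pp_eq_of_same_ends k hW _ _ (by simp) (by simp) (hL1 i) hchain2 ?_ ?_
        · show rep i = ((rep j :: L j) ++ [i]).head (by simp)
          rw [List.head_append]
          simp [hr]
        · rw [hL2 i]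
          exact (List.getLast_concat).symm
      have hppw : pp k ((rep j :: L j) ++ [i]) = pp k (rep j :: L j) * g k i j := by
        conv_lhs =>
          rw [← List.dropLast_append_getLast (l := rep j :: L j) (by simp), hL2 j,
            List.append_assoc, List.singleton_append, pp_append]
        rw [show (rep j :: L j).dropLast ++ [j]
            = rep j :: L j by
              conv_rhs => rw [← List.dropLast_append_getLast (l := rep j :: L j) (by simp), hL2 j]]
        rw [pp_cons_cons, pp_single, mul_one]
      rw [hkey, hppw, g]
      field_simp
    · by_cases hpos' : 0 < k j i
      · exact absurd (hrev j i hij.symm hpos') hpos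
      · have h1 : k i j = 0 := le_antisymm (not_lt.mp hpos) (hk i j hij)
        have h2 : k j i = 0 := le_antisymm (not_lt.mp hpos') (hk j i hij.symm)
        rw [h1, h2]
        ring
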